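/- Define Γ* : ℤ → ℚ by Γ*(n) = (n−1)! for n ≥ 1 and Γ*(n) = (−1)^n/(−n)! for n ≤ 0. Let N ≥ 1, i ∈ {1,…,N}, and let ℓ = (ℓ_1,…,ℓ_N) ∈ ℤ^N be nonzero with ℓ_r ≥ 0 for all r ≠ i and Σ_{r=1}^N ℓ_r = 0. Then for every j ∈ {1,…,N}, the rational number ℓ_j · ∏_{r=1}^N 1/Γ*(ℓ_r + 1) is an integer. (This is the integrality of the coefficients of the A-hypergeometric period series Ψ.) -/

import Mathlib

noncomputable section

/-- The modified Gamma function on integers: `Γ*(n) = (n−1)!` if `n ≥ 1` and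
`Γ*(n) = (−1)^n/|n|!` if `n ≤ 0`. -/
def gammaStar (n : ℤ) : ℚ :=
  if 1 ≤ n then ((n - 1).toNat.factorial : ℚ)
  else (-1 : ℚ) ^ n / ((-n).toNat.factorial : ℚ)

lemma gammaStar_natCast_add_one (k : ℕ) :
    gammaStar ((k : ℤ) + 1) = (k.factorial : ℚ) := by
  rw [gammaStar, if_pos (by omega)]
  norm_num

/-- Integrality of the coefficients of the A-hypergeometric period series `Ψ`:
if `ℓ ∈ ℤ^N` is nonzero with `ℓ_r ≥ 0` for `r ≠ i` and `Σ_r ℓ_r = 0`, then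
`ℓ_j·∏_{r=1}^N 1/Γ*(ℓ_r+1)` is an integer for every `j`. -/
theorem coeff_period_series_integral
    (N : ℕ) (hN : 1 ≤ N) (i : Fin N) (ℓ : Fin N → ℤ)
    (hne : ℓ ≠ 0)
    (hpos : ∀ r : Fin N, r ≠ i → 0 ≤ ℓ r)
    (hsum : ∑ r : Fin N, ℓ r = 0) :
    ∀ j : Fin N, ∃ z : ℤ, (ℓ j : ℚ) * ∏ r : Fin N, (gammaStar (ℓ r + 1))⁻¹ = (z : ℚ) := by
  classical
  intro j
  set s : Finset (Fin N) := Finset.univ.erase i with hs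
  set n : Fin N → ℕ := fun r => (ℓ r).toNat with hn
  have hcast : ∀ r ∈ s, ℓ r = (n r : ℤ) := fun r hr =>
    (Int.toNat_of_nonneg (hpos r (Finset.ne_of_mem_erase hr))).symm
  set S : ℕ := ∑ r ∈ s, n r with hS
  have hsum_s : ∑ r ∈ s, ℓ r = (S : ℤ) := by
    rw [hS]; push_cast
    exact Finset.sum_congr rfl hcast
  have hℓi : ℓ i = -(S : ℤ) := by
    have h := Finset.add_sum_erase Finset.univ ℓ (Finset.mem_univ i)
    rw [hsum] at h
    rw [← hs] at h
    omega
  have hS1 : 1 ≤ S := by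
    by_contra h
    have hS0 : S = 0 := by omega
    apply hne
    funext r
    by_cases hri : r = i
    · subst hri; simp only [hℓi, hS0]; simp
    · have hr : r ∈ s := Finset.mem_erase.mpr ⟨hri, Finset.mem_univ r⟩
      have : n r = 0 := by
        have := (Finset.sum_eq_zero_iff.mp hS0.symm.symm) r hr
        omega
      have := hcast r hr
      simp only [this]
      simp [‹n r = 0›]
  -- the sign
  set ε : ℚ := (-1 : ℚ) ^ (S - 1) with hε
  have hεinv : ε⁻¹ = ε := by rw [hε, ← inv_pow, inv_neg, inv_one]
  have hεne : ε ≠ 0 := by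
    rw [hε]; exact pow_ne_zero _ (by norm_num)
  -- value of gammaStar at i
  have hg2 : gammaStar (ℓ i + 1) = ε / (((S - 1).factorial : ℚ)) := by
    rw [hℓi, gammaStar, if_neg (by omega)]
    have h1 : (-(-(S : ℤ) + 1)).toNat = S - 1 := by omega
    rw [h1]
    congr 1
    have h2 : (-(S : ℤ)) + 1 = -(((S - 1 : ℕ) : ℤ)) := by omega
    rw [h2, zpow_neg, zpow_natCast, ← inv_pow, inv_neg, inv_one]
  set D : ℕ := ∏ r ∈ s, (n r).factorial with hD
  have hDne : (D : ℚ) ≠ 0 := Nat.cast_ne_zero.mpr (Finset.prod_ne_zero_iff.mpr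
    fun r _ => Nat.factorial_ne_zero _)
  have hprod : ∏ r : Fin N, (gammaStar (ℓ r + 1))⁻¹
      = ε * ((S - 1).factorial : ℚ) * (D : ℚ)⁻¹ := by
    rw [← Finset.mul_prod_erase Finset.univ _ (Finset.mem_univ i), ← hs, hg2]
    have h3 : ∀ r ∈ s, (gammaStar (ℓ r + 1))⁻¹ = (((n r).factorial : ℚ))⁻¹ := by
      intro r hr
      rw [hcast r hr, gammaStar_natCast_add_one]
    rw [Finset.prod_congr rfl h3, Finset.prod_inv_distrib, inv_div,
      div_eq_mul_inv, hεinv]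
    have h4 : ((D : ℚ)) = ∏ r ∈ s, ((n r).factorial : ℚ) := by
      rw [hD]; push_cast; rfl
    rw [h4]; ring
  rw [hprod]
  by_cases hji : j = i
  · -- j = i : use multinomial of n over s
    subst hji
    refine ⟨(-1) ^ S * (Nat.multinomial s n : ℤ), ?_⟩
    have hspec : (D : ℚ) * (Nat.multinomial s n : ℚ) = (S.factorial : ℚ) := by
      rw [hD, hS]
      exact_mod_cast Nat.multinomial_spec s n
    have hfac : (S : ℚ) * ((S - 1).factorial : ℚ) = (S.factorial : ℚ) := by
      exact_mod_cast Nat.mul_factorial_pred (by omega)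
    obtain ⟨k, hk⟩ : ∃ k, S = k + 1 := ⟨S - 1, by omega⟩
    have hsign : (-1 : ℚ) ^ S = -ε := by
      rw [hε, hk]; simp [pow_succ]
    rw [hℓi]
    push_cast
    field_simp
    linear_combination (-ε) * hfac + ε * hspec +
      (-(Nat.multinomial s n : ℚ) * (D : ℚ)) * hsign
  · -- j ≠ i
    have hj : j ∈ s := Finset.mem_erase.mpr ⟨hji, Finset.mem_univ j⟩
    by_cases hj0 : ℓ j = 0
    · exact ⟨0, by rw [hj0]; simp⟩
    · have hnj : 1 ≤ n j := by
        have := hpos j hji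
        have := hcast j hj
        omega
      set m : Fin N → ℕ := fun r => if r = j then n j - 1 else n r with hm
      have hmsum : ∑ r ∈ s, m r = S - 1 := by
        have h1 := Finset.add_sum_erase s m hj
        have h2 := Finset.add_sum_erase s n hj
        have h3 : ∑ r ∈ s.erase j, m r = ∑ r ∈ s.erase j, n r := by
          apply Finset.sum_congr rfl
          intro r hr
          rw [hm]
          simp [Finset.ne_of_mem_erase hr]
        have h4 : m j = n j - 1 := by rw [hm]; simp
        omega
      set D' : ℕ := ∏ r ∈ s, (m r).factorial with hD'
      have hDD' : D = n j * D' := by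
        rw [hD, hD', ← Finset.mul_prod_erase s _ hj, ← Finset.mul_prod_erase s
          (fun r => (m r).factorial) hj]
        have h3 : ∏ r ∈ s.erase j, (m r).factorial = ∏ r ∈ s.erase j, (n r).factorial := by
          apply Finset.prod_congr rfl
          intro r hr
          rw [hm]
          simp [Finset.ne_of_mem_erase hr]
        rw [h3]
        have h4 : m j = n j - 1 := by rw [hm]; simp
        rw [h4, ← mul_assoc, Nat.mul_factorial_pred (by omega)]
      refine ⟨(-1) ^ (S - 1) * (Nat.multinomial s m : ℤ), ?_⟩
      have hspec : (D' : ℚ) * (Nat.multinomial s m : ℚ) = ((S - 1).factorial : ℚ) := by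
        have := Nat.multinomial_spec s m
        rw [hmsum] at this
        rw [hD']
        exact_mod_cast this
      have hℓj : (ℓ j : ℚ) = (n j : ℚ) := by exact_mod_cast hcast j hj
      have hnjne : (n j : ℚ) ≠ 0 := Nat.cast_ne_zero.mpr (by omega)
      rw [hℓj]
      push_cast
      rw [hDD']
      push_cast
      have hD'ne : (D' : ℚ) ≠ 0 := Nat.cast_ne_zero.mpr (Finset.prod_ne_zero_iff.mpr
        fun r _ => Nat.factorial_ne_zero _)
      field_simp
      rw [hε]
      linear_combination (-((-1 : ℚ) ^ (S - 1))) * hspec
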